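/- Let ABCD be a convex quadrilateral in the Euclidean plane whose diagonals meet at a point O, where A, O, B are not collinear, and let φ = ∠AOB. Then (dist A B + dist B D + dist D C + dist C A) / (2(π + φ)) < (dist A B + dist B C + dist C D + dist D A) / (2π). -/

import Mathlib

open Real EuclideanGeometry

private lemma aux_key (X O Y : EuclideanSpace ℝ (Fin 2)) :
    ∠ X O Y * (dist X O + dist O Y) ≤ π * dist X Y := by
  have h0 : 0 ≤ ∠ X O Y := angle_nonneg _ _ _
  have hπ : ∠ X O Y ≤ π := angle_le_pi _ _ _
  set θ := ∠ X O Y with hθ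
  have hs : 2 / π * (θ / 2) ≤ Real.sin (θ / 2) :=
    Real.mul_le_sin (by linarith) (by linarith)
  have hsq : Real.sin (θ / 2) ^ 2 = 1 / 2 - Real.cos θ / 2 := by
    have := Real.sin_sq_eq_half_sub (θ / 2)
    rwa [mul_div_cancel₀ θ two_ne_zero] at this
  have hcos := EuclideanGeometry.law_cos X O Y
  have hsnn : 0 ≤ Real.sin (θ / 2) :=
    Real.sin_nonneg_of_nonneg_of_le_pi (by linarith) (by linarith [Real.pi_pos])
  have hab : 0 ≤ dist X O + dist O Y := by positivity
  have hcle : -1 ≤ Real.cos θ := Real.neg_one_le_cos θ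
  have hYO : dist Y O = dist O Y := dist_comm Y O
  rw [← hθ, hYO] at hcos
  have hsq2 : ((dist X O + dist O Y) * Real.sin (θ / 2)) ^ 2 ≤ dist X Y ^ 2 := by
    rw [mul_pow, hsq]
    nlinarith [hcos, mul_nonneg (sq_nonneg (dist X O - dist O Y)) (by linarith : (0:ℝ) ≤ 1 + Real.cos θ)]
  have hle : (dist X O + dist O Y) * Real.sin (θ / 2) ≤ dist X Y := by
    have h1 : 0 ≤ (dist X O + dist O Y) * Real.sin (θ / 2) := mul_nonneg hab hsnn
    nlinarith [dist_nonneg (x := X) (y := Y)]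
  have hπpos := Real.pi_pos
  have hs' : θ / π ≤ Real.sin (θ / 2) := by
    have : 2 / π * (θ / 2) = θ / π := by field_simp
    linarith [hs, this ▸ hs]
  calc θ * (dist X O + dist O Y) = π * ((θ / π) * (dist X O + dist O Y)) := by
        field_simp
    _ ≤ π * ((dist X O + dist O Y) * Real.sin (θ / 2)) := by
        have : (θ / π) * (dist X O + dist O Y) ≤ Real.sin (θ / 2) * (dist X O + dist O Y) :=
          mul_le_mul_of_nonneg_right hs' hab
        nlinarith
    _ ≤ π * dist X Y := by nlinarith

/-- **Lemma 5** of Nazarov–Petrov: for a convex quadrilateral `ABCD` in the plane whose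
diagonals meet at `O`, with `φ = ∠AOB`, one has
`(AB + BD + DC + CA)/(2(π + φ)) < (AB + BC + CD + DA)/(2π)`. -/
theorem lemma5_strict (A B C D O : EuclideanSpace ℝ (Fin 2))
    (hAOC : Sbtw ℝ A O C) (hBOD : Sbtw ℝ B O D)
    (hncol : ¬ Collinear ℝ ({A, O, B} : Set (EuclideanSpace ℝ (Fin 2)))) :
    (dist A B + dist B D + dist D C + dist C A) / (2 * (π + ∠ A O B)) <
      (dist A B + dist B C + dist C D + dist D A) / (2 * π) := by
  have hπpos := Real.pi_pos
  set φ := ∠ A O B with hφdef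
  have hφpos : 0 < φ := EuclideanGeometry.angle_pos_of_not_collinear hncol
  have hφle : φ ≤ π := angle_le_pi _ _ _
  -- angle facts
  have hACpi : ∠ A O C = π := hAOC.angle₁₂₃_eq_pi
  have hBDpi : ∠ B O D = π := hBOD.angle₁₂₃_eq_pi
  have h1 : ∠ B O A + ∠ B O C = π :=
    EuclideanGeometry.angle_add_angle_eq_pi_of_angle_eq_pi B hACpi
  have h2 : ∠ A O B + ∠ A O D = π :=
    EuclideanGeometry.angle_add_angle_eq_pi_of_angle_eq_pi A hBDpi
  have hBOC : ∠ B O C = π - φ := by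
    rw [EuclideanGeometry.angle_comm B O A] at h1; linarith
  have hDOA : ∠ D O A = π - φ := by
    rw [EuclideanGeometry.angle_comm D O A]; linarith
  -- key inequalities from aux_key
  have k1 : (π - φ) * (dist B O + dist O C) ≤ π * dist B C := by
    have := aux_key B O C; rwa [hBOC] at this
  have k2 : (π - φ) * (dist D O + dist O A) ≤ π * dist D A := by
    have := aux_key D O A; rwa [hDOA] at this
  -- diagonal splits
  have hd1 : dist B O + dist O D = dist B D := hBOD.wbtw.dist_add_dist
  have hd2 : dist A O + dist O C = dist A C := hAOC.wbtw.dist_add_dist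
  -- strict triangle inequality AC < AB + BC
  have hsAC : dist A C < dist A B + dist B C := by
    rcases (dist_triangle A B C).lt_or_eq.symm with h | h
    · exfalso
      have hw : Wbtw ℝ A B C := dist_add_dist_eq_iff.1 h.symm
      have hB : B ∈ line[ℝ, A, C] := hw.mem_affineSpan
      have hO : O ∈ line[ℝ, A, C] := hAOC.wbtw.mem_affineSpan
      have hcol : Collinear ℝ ({O, B, A, C} : Set (EuclideanSpace ℝ (Fin 2))) :=
        collinear_insert_insert_of_mem_affineSpan_pair hO hB
      exact hncol (hcol.subset (by intro x hx; simp at hx ⊢; tauto))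
    · linarith
  -- other triangle inequalities
  have t2 : dist C A ≤ dist C D + dist D A := dist_triangle C D A
  have t3 : dist B D ≤ dist B C + dist C D := dist_triangle B C D
  have t4 : dist B D ≤ dist B A + dist A D := dist_triangle B A D
  -- sum of diagonals strictly less than perimeter
  have hsum : dist B D + dist A C < dist A B + dist B C + dist C D + dist D A := by
    rw [dist_comm C A] at t2
    rw [dist_comm B A, dist_comm A D] at t4
    linarith
  -- multiply by φ
  have hmul : φ * (dist B D + dist A C) < φ * (dist A B + dist B C + dist C D + dist D A) :=
    mul_lt_mul_of_pos_left hsum hφpos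
  -- products of equalities for linarith
  have hd1π : π * (dist B O + dist O D) = π * dist B D := by rw [hd1]
  have hd2π : π * (dist A O + dist O C) = π * dist A C := by rw [hd2]
  have hd1φ : φ * (dist B O + dist O D) = φ * dist B D := by rw [hd1]
  have hd2φ : φ * (dist A O + dist O C) = φ * dist A C := by rw [hd2]
  have hDC : dist D C = dist C D := dist_comm D C
  have hCA : dist C A = dist A C := dist_comm C A
  have hDO : dist D O = dist O D := dist_comm D O
  have hOA : dist O A = dist A O := dist_comm O A
  -- put everything together
  rw [div_lt_div_iff₀ (by linarith) (by linarith)]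
  ring_nf
  nlinarith [k1, k2, hmul, hd1π, hd2π, hd1φ, hd2φ]
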